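/- Let T be a nilpotent linear operator on a finite-dimensional vector space V over a field, and let q : V → V/Im(T) be the canonical projection. Define the weight K(v) of a nonzero vector v to be the least m with T^m v = 0. Then the orbit {T^k b : b ∈ B, T^k b ≠ 0} of any K-minimum-weight set B whose image under q is a basis of V/Im(T) is a Jordan basis of V for T (i.e., a basis of V that is a disjoint union of T-orbits). -/

import Mathlib

/-- A `q`-basis: a finite set mapping injectively under the quotient map
`q : V → V/Im(T)` to a basis of `V/Im(T)`. -/
def IsQBasis {k V : Type*} [Field k] [AddCommGroup V] [Module k V]
    (T : V →ₗ[k] V) (B : Finset V) : Prop :=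
  Set.InjOn (Submodule.mkQ (LinearMap.range T)) (B : Set V) ∧
  LinearIndependent k (fun b : B => Submodule.mkQ (LinearMap.range T) b) ∧
  Submodule.span k (Submodule.mkQ (LinearMap.range T) '' (B : Set V)) = ⊤

open Submodule LinearMap Finset


private lemma qb_sum_zero {k V : Type*} [Field k] [AddCommGroup V] [Module k V]
    {T : V →ₗ[k] V} {B : Finset V} (hB : IsQBasis T B) (g : V → k)
    (h : ∑ b ∈ B, g b • Submodule.mkQ (LinearMap.range T) b = 0) :
    ∀ b ∈ B, g b = 0 := by
  have hli := hB.2.1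
  rw [Fintype.linearIndependent_iff] at hli
  intro b hb
  exact hli (fun i => g i)
    (by rw [Finset.sum_coe_sort B (fun b => g b • Submodule.mkQ (LinearMap.range T) b)]; exact h)
    ⟨b, hb⟩

private lemma qb_exchange {k V : Type*} [Field k] [AddCommGroup V] [Module k V]
    [FiniteDimensional k V] [DecidableEq V]
    {T : V →ₗ[k] V} {B : Finset V} (hB : IsQBasis T B) {b₀ : V} (hb₀ : b₀ ∈ B)
    {w : V} {e : V → k} (he : e b₀ ≠ 0)
    (hw : Submodule.mkQ (LinearMap.range T) w
        = ∑ b ∈ B, e b • Submodule.mkQ (LinearMap.range T) b) :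
    IsQBasis T (insert w (B.erase b₀)) ∧ w ∉ B.erase b₀ := by
  set q := Submodule.mkQ (LinearMap.range T) with hqdef
  have hne : ∀ b₁ ∈ B.erase b₀, q w ≠ q b₁ := by
    intro b₁ hb₁ heq
    have hb₁B : b₁ ∈ B := Finset.mem_of_mem_erase hb₁
    have hb₁ne : b₀ ≠ b₁ := (Finset.ne_of_mem_erase hb₁).symm
    have hrel : ∑ b ∈ B, (e b - if b = b₁ then 1 else 0) • q b = 0 := by
      simp only [sub_smul, Finset.sum_sub_distrib, ite_smul, one_smul, zero_smul,
        Finset.sum_ite_eq' B b₁, if_pos hb₁B, ← hw, heq, sub_self]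
    have h0 := qb_sum_zero hB _ hrel b₀ hb₀
    rw [if_neg hb₁ne, sub_zero] at h0
    exact he h0
  have hwmem : w ∉ B.erase b₀ := fun h => hne w h rfl
  have hcard : (insert w (B.erase b₀)).card = B.card := by
    rw [Finset.card_insert_of_notMem hwmem, Finset.card_erase_of_mem hb₀]
    exact Nat.succ_pred_eq_of_pos (Finset.card_pos.mpr ⟨b₀, hb₀⟩)
  have hsets : ∀ (C : Finset V), (Set.range fun b : C => q ↑b) = q '' ↑C := by
    intro C; ext x; simp
  have bas : Module.Basis B k (V ⧸ LinearMap.range T) :=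
    Module.Basis.mk hB.2.1 (by rw [hsets]; exact le_of_eq hB.2.2.symm)
  have hfr : Module.finrank k (V ⧸ LinearMap.range T) = B.card := by
    rw [Module.finrank_eq_card_basis bas, Fintype.card_coe]
  have hspan : Submodule.span k (q '' ↑(insert w (B.erase b₀))) = ⊤ := by
    rw [eq_top_iff, ← hB.2.2]
    apply Submodule.span_le.mpr
    rintro x ⟨b, hb, rfl⟩
    have hbB : b ∈ B := hb
    by_cases hbb : b = b₀
    · subst hbb
      have hsum : q w = e b • q b + ∑ b' ∈ B.erase b, e b' • q b' := by
        rw [hw, ← Finset.add_sum_erase B _ hbB]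
      have hrep : q b = (e b)⁻¹ • (q w - ∑ b' ∈ B.erase b, e b' • q b') := by
        rw [hsum, add_sub_cancel_right, smul_smul, inv_mul_cancel₀ he, one_smul]
      rw [hrep]
      refine Submodule.smul_mem _ _ (Submodule.sub_mem _ ?_ ?_)
      · exact Submodule.subset_span ⟨w, by simp, rfl⟩
      · exact Submodule.sum_mem _ fun b' hb' => Submodule.smul_mem _ _
          (Submodule.subset_span ⟨b', by simp [Finset.mem_insert, Finset.mem_erase,
            Finset.mem_of_mem_erase hb', Finset.ne_of_mem_erase hb'], rfl⟩)
    · exact Submodule.subset_span ⟨b, by simp [Finset.mem_insert, Finset.mem_erase, hbb, hbB], rfl⟩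
  have hli' : LinearIndependent k (fun b : (insert w (B.erase b₀) : Finset V) => q b) :=
    linearIndependent_of_top_le_span_of_card_eq_finrank
      (by rw [hsets]; exact le_of_eq hspan.symm) (by rw [Fintype.card_coe, hcard, hfr])
  exact ⟨⟨Set.injOn_iff_injective.mpr hli'.injective, hli', hspan⟩, hwmem⟩

private lemma qb_key {k V : Type*} [Field k] [AddCommGroup V] [Module k V]
    [FiniteDimensional k V] [DecidableEq V]
    {T : V →ₗ[k] V} {B : Finset V} {K : V → ℕ} (hB : IsQBasis T B)
    (hmin : ∀ B' : Finset V, IsQBasis T B' → ∑ b ∈ B, K b ≤ ∑ b ∈ B', K b)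
    {b₀ : V} (hb₀ : b₀ ∈ B) {w : V} {e : V → k} (he : e b₀ ≠ 0)
    (hw : Submodule.mkQ (LinearMap.range T) w
        = ∑ b ∈ B, e b • Submodule.mkQ (LinearMap.range T) b) :
    K b₀ ≤ K w := by
  obtain ⟨hB', hwmem⟩ := qb_exchange hB hb₀ he hw
  have h1 := hmin _ hB'
  rw [Finset.sum_insert hwmem, ← Finset.add_sum_erase B K hb₀] at h1
  exact le_of_add_le_add_right h1

theorem stmt0 {k V : Type*} [Field k] [AddCommGroup V] [Module k V]
    [FiniteDimensional k V] (T : V →ₗ[k] V) (hT : ∃ n : ℕ, T ^ n = 0)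
    (K : V → ℕ) (hK : ∀ v, K v = sInf {m : ℕ | (T ^ m) v = 0})
    (B : Finset V) (hB : IsQBasis T B)
    (hmin : ∀ B' : Finset V, IsQBasis T B' → ∑ b ∈ B, K b ≤ ∑ b ∈ B', K b) :
    LinearIndependent k
      (Subtype.val : {v : V | ∃ b ∈ B, ∃ m : ℕ, v = (T ^ m) b ∧ v ≠ 0} → V) ∧
    Submodule.span k {v : V | ∃ b ∈ B, ∃ m : ℕ, v = (T ^ m) b ∧ v ≠ 0} = ⊤ ∧
    ∀ b ∈ B, ∀ b' ∈ B, b ≠ b' →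
      Disjoint {v : V | ∃ m : ℕ, v = (T ^ m) b ∧ v ≠ 0}
        {v : V | ∃ m : ℕ, v = (T ^ m) b' ∧ v ≠ 0} := by
  classical
  obtain ⟨n, hn⟩ := hT
  set q := Submodule.mkQ (LinearMap.range T) with hqdef
  set S : Set V := {v : V | ∃ b ∈ B, ∃ m : ℕ, v = (T ^ m) b ∧ v ≠ 0} with hSdef
  -- basic facts about K
  have hKzero : ∀ v, (T ^ K v) v = 0 := by
    intro v
    have h1 : sInf {m : ℕ | (T ^ m) v = 0} ∈ {m : ℕ | (T ^ m) v = 0} :=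
      Nat.sInf_mem ⟨n, by simp [hn]⟩
    rw [← hK v] at h1
    exact h1
  have hKle : ∀ v m, (T ^ m) v = 0 → K v ≤ m := fun v m h => by
    rw [hK v]; exact Nat.sInf_le h
  have hKlt : ∀ v m, (T ^ m) v ≠ 0 → m < K v := by
    intro v m h
    by_contra hc
    push_neg at hc
    obtain ⟨j, rfl⟩ := Nat.exists_eq_add_of_le hc
    apply h
    rw [add_comm, pow_add, Module.End.mul_apply, hKzero, map_zero]
  -- q of image under positive power of T is zero
  have hqT : ∀ (j : ℕ) (x : V), 0 < j → q ((T ^ j) x) = 0 := by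
    intro j x hj
    obtain ⟨i, rfl⟩ := Nat.exists_eq_add_of_lt hj
    rw [hqdef, Submodule.mkQ_apply, Submodule.Quotient.mk_eq_zero]
    exact ⟨(T ^ i) x, by rw [← Module.End.mul_apply, ← pow_succ']; ring_nf⟩
  -- spanning
  have hspan : Submodule.span k S = ⊤ := by
    set W := Submodule.span k S with hWdef
    have htop : Submodule.span k (↑B : Set V) ⊔ LinearMap.range T = ⊤ := by
      have h1 : Submodule.map q (Submodule.span k (↑B : Set V)) = ⊤ := by
        rw [← Submodule.span_image, hB.2.2]
      rw [eq_top_iff]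
      intro v _
      have h2 : v ∈ Submodule.comap q (Submodule.map q (Submodule.span k (↑B : Set V))) := by
        rw [h1]; trivial
      rwa [Submodule.comap_map_eq, Submodule.ker_mkQ] at h2
    have hstep : ∀ j : ℕ, LinearMap.range (T ^ j) ≤ W ⊔ LinearMap.range (T ^ (j + 1)) := by
      intro j
      rw [← Submodule.map_top (T ^ j), ← htop, Submodule.map_sup]
      apply sup_le_sup
      · rw [← Submodule.span_image]
        apply Submodule.span_le.mpr
        rintro x ⟨b, hbB, rfl⟩
        by_cases h0 : (T ^ j) b = 0
        · rw [h0]; exact Submodule.zero_mem W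
        · exact Submodule.subset_span ⟨b, hbB, j, rfl, h0⟩
      · rw [← LinearMap.range_comp, ← Module.End.mul_eq_comp, ← pow_succ]
    have hind : ∀ j : ℕ, (⊤ : Submodule k V) ≤ W ⊔ LinearMap.range (T ^ j) := by
      intro j
      induction j with
      | zero =>
        rw [pow_zero]
        refine le_sup_of_le_right ?_
        rw [Module.End.one_eq_id, LinearMap.range_id]
      | succ j ih =>
        calc (⊤ : Submodule k V) ≤ W ⊔ LinearMap.range (T ^ j) := ih
          _ ≤ W ⊔ (W ⊔ LinearMap.range (T ^ (j + 1))) := sup_le_sup_left (hstep j) W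
          _ = W ⊔ LinearMap.range (T ^ (j + 1)) := by rw [← sup_assoc, sup_idem]
    have h3 := hind n
    rw [hn, LinearMap.range_zero, sup_bot_eq, top_le_iff] at h3
    exact h3
  refine ⟨?_, hspan, ?_⟩
  · -- linear independence of the orbit
    rw [show (Subtype.val : S → V) = fun x : S => (x : V) from rfl, linearIndependent_subtype_iff, linearIndepOn_iff]
    intro l hl hsum
    by_contra hl0
    rw [Finsupp.mem_supported] at hl
    have hsupp : ∀ v ∈ l.support, ∃ b m, b ∈ B ∧ v = (T ^ m) b ∧ v ≠ 0 := by
      intro v hv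
      obtain ⟨b, hbB, m, hvm, hv0⟩ := hl hv
      exact ⟨b, m, hbB, hvm, hv0⟩
    choose! bf mf hbfB hveq hvne using hsupp
    have hne : l.support.Nonempty := Finsupp.support_nonempty_iff.mpr hl0
    set m₀ := (l.support.image mf).min' (hne.image mf) with hm₀def
    obtain ⟨v₀, hv₀, hv₀m⟩ := Finset.mem_image.mp (Finset.min'_mem _ (hne.image mf))
    have hm₀le : ∀ v ∈ l.support, m₀ ≤ mf v := fun v hv =>
      Finset.min'_le _ _ (Finset.mem_image_of_mem mf hv)
    have hs0 : ∑ v ∈ l.support, l v • v = 0 := by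
      rw [← hsum, Finsupp.linearCombination_apply, Finsupp.sum]
      rfl
    set w : V := ∑ v ∈ l.support, l v • (T ^ (mf v - m₀)) (bf v) with hwdef
    have hTw : (T ^ m₀) w = 0 := by
      rw [hwdef, map_sum, ← hs0]
      apply Finset.sum_congr rfl
      intro v hv
      rw [map_smul, ← Module.End.mul_apply, ← pow_add,
        Nat.add_sub_cancel' (hm₀le v hv), ← hveq v hv]
    set s₀ := l.support.filter (fun v => mf v = m₀) with hs₀def
    have hs₀mem : ∀ v ∈ s₀, v ∈ l.support ∧ mf v = m₀ := by
      intro v hv; exact Finset.mem_filter.mp hv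
    have hrec : ∀ v ∈ s₀, (T ^ m₀) (bf v) = v := by
      intro v hv
      obtain ⟨hv1, hv2⟩ := hs₀mem v hv
      rw [← hv2, ← hveq v hv1]
    have hinj : ∀ x ∈ s₀, ∀ y ∈ s₀, bf x = bf y → x = y := by
      intro x hx y hy hxy
      rw [← hrec x hx, ← hrec y hy, hxy]
    set e : V → k := fun b => if b ∈ s₀.image bf then l ((T ^ m₀) b) else 0 with hedef
    have himsub : s₀.image bf ⊆ B := by
      intro b hb
      obtain ⟨v, hv, rfl⟩ := Finset.mem_image.mp hb
      exact hbfB v (hs₀mem v hv).1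
    have hqw : q w = ∑ b ∈ B, e b • q b := by
      have h1 : ∑ b ∈ B, e b • q b = ∑ b ∈ s₀.image bf, l ((T ^ m₀) b) • q b := by
        rw [hedef]
        simp only [ite_smul, zero_smul]
        rw [Finset.sum_ite_mem, Finset.inter_eq_right.mpr himsub]
      have h2 : ∑ b ∈ s₀.image bf, l ((T ^ m₀) b) • q b
          = ∑ v ∈ s₀, l v • q (bf v) := by
        rw [Finset.sum_image hinj]
        apply Finset.sum_congr rfl
        intro v hv
        rw [hrec v hv]
      have h3 : q w = ∑ v ∈ l.support, l v • q ((T ^ (mf v - m₀)) (bf v)) := by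
        rw [hwdef, map_sum]
        simp only [map_smul]
      rw [h1, h2, h3]
      rw [← Finset.sum_filter_of_ne (p := fun v => mf v = m₀)]
      · apply Finset.sum_congr rfl
        intro v hv
        have := (hs₀mem v hv).2
        rw [this, Nat.sub_self, pow_zero, Module.End.one_apply]
      · intro v hv hnz
        by_contra hmv
        apply hnz
        have hpos : 0 < mf v - m₀ := by
          have := hm₀le v hv
          omega
        rw [hqT _ _ hpos, smul_zero]
    have hv₀s₀ : v₀ ∈ s₀ := Finset.mem_filter.mpr ⟨hv₀, hv₀m⟩
    have hb₀B : bf v₀ ∈ B := hbfB v₀ hv₀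
    have he0 : e (bf v₀) ≠ 0 := by
      rw [hedef]
      simp only [Finset.mem_image_of_mem bf hv₀s₀, if_true]
      rw [hrec v₀ hv₀s₀]
      exact Finsupp.mem_support_iff.mp hv₀
    have hkey := qb_key hB hmin hb₀B he0 hqw
    have h4 : K w ≤ m₀ := hKle w m₀ hTw
    have h5 : m₀ < K (bf v₀) := by
      apply hKlt
      rw [hrec v₀ hv₀s₀]
      exact hvne v₀ hv₀
    omega
  · -- disjointness
    have aux : ∀ b ∈ B, ∀ b' ∈ B, b ≠ b' → ∀ m m' : ℕ, m ≤ m' →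
        (T ^ m) b = (T ^ m') b' → (T ^ m) b ≠ 0 → False := by
      intro b hb b' hb' hbb' m m' hmm' heq hne0
      set c : k := if m' = m then -1 else 0 with hcdef
      set w : V := b - (T ^ (m' - m)) b' with hwdef
      set e : V → k := fun x => if x = b then 1 else if x = b' then c else 0 with hedef
      have hTw : (T ^ m) w = 0 := by
        rw [hwdef, map_sub, ← Module.End.mul_apply, ← pow_add,
          Nat.add_sub_cancel' hmm', ← heq, sub_self]
      have hqw : q w = q b + c • q b' := by
        rw [hwdef, map_sub]
        by_cases h : m' = m
        · rw [hcdef, if_pos h, h, Nat.sub_self, pow_zero, Module.End.one_apply,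
            neg_one_smul, sub_eq_add_neg]
        · have hpos : 0 < m' - m := by omega
          rw [hcdef, if_neg h, hqT _ _ hpos, zero_smul, add_zero, sub_zero]
      have hsub : {b, b'} ⊆ B := by
        intro x hx
        rcases Finset.mem_insert.mp hx with rfl | hx
        · exact hb
        · rw [Finset.mem_singleton.mp hx]; exact hb'
      have hsum : ∑ x ∈ B, e x • q x = q b + c • q b' := by
        have heb : e b = 1 := by rw [hedef]; simp
        have heb' : e b' = c := by rw [hedef]; simp [Ne.symm hbb']
        rw [← Finset.sum_subset hsub (fun x hxB hx => by
          have hxb : x ≠ b := fun hh => hx (by rw [hh]; exact Finset.mem_insert_self _ _)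
          have hxb' : x ≠ b' := fun hh => hx (by
            rw [hh]; exact Finset.mem_insert_of_mem (Finset.mem_singleton_self _))
          rw [hedef]
          simp only [if_neg hxb, if_neg hxb', zero_smul])]
        rw [Finset.sum_pair hbb', heb, heb', one_smul]
      have he0 : e b ≠ 0 := by rw [hedef]; simp
      have hkey := qb_key hB hmin hb he0 (by rw [hqw, hsum])
      have h4 : K w ≤ m := hKle w m hTw
      have h5 : m < K b := hKlt b m hne0
      omega
    intro b hb b' hb' hbb'
    rw [Set.disjoint_left]
    rintro v ⟨m, rfl, hv0⟩ ⟨m', heq', hv0'⟩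
    rcases le_total m m' with h | h
    · exact aux b hb b' hb' hbb' m m' h heq' hv0
    · exact aux b' hb' b hb hbb'.symm m' m h heq'.symm (heq' ▸ hv0)
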